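/- Let a ∈ C([0,1]) be nonnegative. Let u ∈ H¹(0,1) be such that u' is absolutely continuous on [0,1], √a·u'' ∈ L²(0,1) and a·u'' ∈ H²(0,1), and let v ∈ H¹(0,1) be such that v' is absolutely continuous on [0,1] and √a·v'' ∈ L²(0,1). Then ∫₀¹ (a u'')'' v dx = (a u'')'(1) v(1) − (a u'')'(0) v(0) − (a u'')(1) v'(1) + (a u'')(0) v'(0) + ∫₀¹ a u'' v'' dx. -/

import Mathlib

open MeasureTheory Set Filter

/-- `f` is absolutely continuous on `[c,d]` with (a.e.) derivative `g`,
expressed via the fundamental theorem of calculus. -/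
def ACOn (c d : ℝ) (f g : ℝ → ℝ) : Prop :=
  MeasureTheory.IntegrableOn g (Set.Icc c d) ∧
    ∀ x ∈ Set.Icc c d, f x = f c + ∫ t in c..x, g t

/-- `f` is locally absolutely continuous on `[0,1] \ {x₀}` with derivative `g`. -/
def LocACOn (x₀ : ℝ) (f g : ℝ → ℝ) : Prop :=
  ∀ c d : ℝ, 0 ≤ c → d ≤ 1 → c ≤ d → x₀ ∉ Set.Icc c d → ACOn c d f g

/-- `a` is weakly degenerate with degeneracy point `x₀`. -/
def WeaklyDeg (a : ℝ → ℝ) (x₀ : ℝ) : Prop :=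
  ContinuousOn a (Set.Icc 0 1) ∧ x₀ ∈ Set.Icc (0:ℝ) 1 ∧ a x₀ = 0 ∧
    (∀ x ∈ Set.Icc (0:ℝ) 1, x ≠ x₀ → 0 < a x) ∧
    MeasureTheory.IntegrableOn (fun x => 1 / a x) (Set.Ioo 0 1)

/-- `a` is strongly degenerate with degeneracy point `x₀`. -/
def StronglyDeg (a : ℝ → ℝ) (x₀ : ℝ) : Prop :=
  ContinuousOn a (Set.Icc 0 1) ∧ x₀ ∈ Set.Icc (0:ℝ) 1 ∧ a x₀ = 0 ∧
    (∀ x ∈ Set.Icc (0:ℝ) 1, x ≠ x₀ → 0 < a x) ∧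
    ¬ MeasureTheory.IntegrableOn (fun x => 1 / a x) (Set.Ioo 0 1)

/-- Hypothesis (H): there is `K ∈ [1,2)` such that `x ↦ |x-x₀|^K / a x` is
non-increasing on `[0,x₀)` and non-decreasing on `(x₀,1]`. -/
def HypH (a : ℝ → ℝ) (x₀ : ℝ) : Prop :=
  ∃ K : ℝ, 1 ≤ K ∧ K < 2 ∧
    AntitoneOn (fun x => |x - x₀| ^ K / a x) (Set.Ico 0 x₀) ∧
    MonotoneOn (fun x => |x - x₀| ^ K / a x) (Set.Ioc x₀ 1)

/-- The squared `L²(0,1)` norm. -/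
noncomputable def sqL2 (f : ℝ → ℝ) : ℝ := ∫ x in Set.Ioo (0:ℝ) 1, (f x) ^ 2

/-- Core Fubini identity. -/
lemma ibp_core (f' g' : ℝ → ℝ)
    (hf : MeasureTheory.IntegrableOn f' (Set.Icc 0 1))
    (hg : MeasureTheory.IntegrableOn g' (Set.Icc 0 1)) :
    (∫ x in Set.Ioo (0:ℝ) 1, f' x * ∫ t in Set.Ioc 0 x, g' t) +
      (∫ x in Set.Ioo (0:ℝ) 1, g' x * ∫ t in Set.Ioc 0 x, f' t) =
    (∫ x in Set.Ioo (0:ℝ) 1, f' x) * (∫ x in Set.Ioo (0:ℝ) 1, g' x) := by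
  set μ : Measure ℝ := volume.restrict (Set.Ioo 0 1) with hμ
  have hμf : Integrable f' μ := hf.mono_set Set.Ioo_subset_Icc_self
  have hμg : Integrable g' μ := hg.mono_set Set.Ioo_subset_Icc_self
  set D : Set (ℝ × ℝ) := {p | p.2 ≤ p.1} with hD_def
  set D' : Set (ℝ × ℝ) := {p | p.1 ≤ p.2} with hD'_def
  have hD : MeasurableSet D := measurableSet_le measurable_snd measurable_fst
  have hD' : MeasurableSet D' := measurableSet_le measurable_fst measurable_snd
  set F : ℝ × ℝ → ℝ := D.indicator (fun p => f' p.1 * g' p.2) with hF_def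
  set G : ℝ × ℝ → ℝ := D'.indicator (fun p => f' p.1 * g' p.2) with hG_def
  have hprod : Integrable (fun p : ℝ × ℝ => f' p.1 * g' p.2) (μ.prod μ) :=
    hμf.mul_prod hμg
  have hF : Integrable F (μ.prod μ) := hprod.indicator hD
  have hG : Integrable G (μ.prod μ) := hprod.indicator hD'
  -- first term
  have inner1 : ∀ x ∈ Set.Ioo (0:ℝ) 1,
      f' x * ∫ t in Set.Ioc 0 x, g' t = ∫ t, F (x, t) ∂μ := by
    intro x hx
    have hsub : Set.Ioc (0:ℝ) x ⊆ Set.Ioo 0 1 := fun t ht =>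
      ⟨ht.1, lt_of_le_of_lt ht.2 hx.2⟩
    have : ∫ t, F (x, t) ∂μ
        = ∫ t in Set.Ioo (0:ℝ) 1, (Set.Ioc (0:ℝ) x).indicator (fun t => f' x * g' t) t := by
      apply setIntegral_congr_fun measurableSet_Ioo
      intro t ht
      show F (x, t) = _
      rw [hF_def]
      by_cases h : t ≤ x
      · rw [Set.indicator_of_mem (show (x, t) ∈ D from h),
          Set.indicator_of_mem (show t ∈ Set.Ioc 0 x from ⟨ht.1, h⟩)]
      · rw [Set.indicator_of_notMem (show (x, t) ∉ D from h),
          Set.indicator_of_notMem (fun hc => h hc.2)]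
    rw [this, setIntegral_indicator measurableSet_Ioc,
      Set.inter_eq_right.mpr hsub, integral_const_mul]
  -- second term
  have inner2 : ∀ x ∈ Set.Ioo (0:ℝ) 1,
      g' x * ∫ t in Set.Ioc 0 x, f' t = ∫ t, G (t, x) ∂μ := by
    intro x hx
    have hsub : Set.Ioc (0:ℝ) x ⊆ Set.Ioo 0 1 := fun t ht =>
      ⟨ht.1, lt_of_le_of_lt ht.2 hx.2⟩
    have : ∫ t, G (t, x) ∂μ
        = ∫ t in Set.Ioo (0:ℝ) 1, (Set.Ioc (0:ℝ) x).indicator (fun t => f' t * g' x) t := by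
      apply setIntegral_congr_fun measurableSet_Ioo
      intro t ht
      show G (t, x) = _
      rw [hG_def]
      by_cases h : t ≤ x
      · rw [Set.indicator_of_mem (show (t, x) ∈ D' from h),
          Set.indicator_of_mem (show t ∈ Set.Ioc 0 x from ⟨ht.1, h⟩)]
      · rw [Set.indicator_of_notMem (show (t, x) ∉ D' from h),
          Set.indicator_of_notMem (fun hc => h hc.2)]
    rw [this, setIntegral_indicator measurableSet_Ioc,
      Set.inter_eq_right.mpr hsub, integral_mul_const]
    ring
  have e1 : (∫ x in Set.Ioo (0:ℝ) 1, f' x * ∫ t in Set.Ioc 0 x, g' t)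
      = ∫ p, F p ∂(μ.prod μ) := by
    rw [show (∫ x in Set.Ioo (0:ℝ) 1, f' x * ∫ t in Set.Ioc 0 x, g' t)
        = ∫ x, (∫ t, F (x, t) ∂μ) ∂μ from
      setIntegral_congr_fun measurableSet_Ioo inner1]
    exact integral_integral hF
  have hGswap : Integrable (fun p : ℝ × ℝ => G (p.2, p.1)) (μ.prod μ) := hG.swap
  have e2 : (∫ x in Set.Ioo (0:ℝ) 1, g' x * ∫ t in Set.Ioc 0 x, f' t)
      = ∫ p, G p ∂(μ.prod μ) := by
    rw [show (∫ x in Set.Ioo (0:ℝ) 1, g' x * ∫ t in Set.Ioc 0 x, f' t)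
        = ∫ x, (∫ t, G (t, x) ∂μ) ∂μ from
      setIntegral_congr_fun measurableSet_Ioo inner2]
    rw [integral_integral_swap hGswap]
    exact integral_integral hG
  have hdiag : (μ.prod μ) {p : ℝ × ℝ | p.1 = p.2} = 0 := by
    rw [Measure.prod_apply (measurableSet_eq_fun measurable_fst measurable_snd)]
    have : ∀ x : ℝ, μ (Prod.mk x ⁻¹' {p : ℝ × ℝ | p.1 = p.2}) = 0 := by
      intro x
      have : Prod.mk x ⁻¹' {p : ℝ × ℝ | p.1 = p.2} = {x} := by
        ext y; simp [eq_comm]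
      rw [this]
      exact le_antisymm (le_trans (Measure.restrict_le_self _) (by simp)) bot_le
    simp [this]
  have hae : ∀ᵐ p ∂(μ.prod μ), p.1 ≠ (p.2 : ℝ) := by
    rw [ae_iff]; simpa using hdiag
  have e3 : ∫ p, F p ∂(μ.prod μ) + ∫ p, G p ∂(μ.prod μ)
      = ∫ p, f' p.1 * g' p.2 ∂(μ.prod μ) := by
    rw [← integral_add hF hG]
    apply integral_congr_ae
    filter_upwards [hae] with p hp
    rcases lt_or_gt_of_ne hp with h | h
    · show F p + G p = _
      rw [hF_def, hG_def, Set.indicator_of_notMem (show p ∉ D from not_le.2 h),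
        Set.indicator_of_mem (show p ∈ D' from h.le), zero_add]
    · show F p + G p = _
      rw [hF_def, hG_def, Set.indicator_of_mem (show p ∈ D from h.le),
        Set.indicator_of_notMem (show p ∉ D' from not_le.2 h), add_zero]
  rw [e1, e2, e3, integral_prod_mul]

/-- Integration by parts for absolutely continuous functions on `[0,1]`. -/
lemma ibp (f f' g g' : ℝ → ℝ) (hf : ACOn 0 1 f f') (hg : ACOn 0 1 g g')
    (h1 : MeasureTheory.IntegrableOn (fun x => f' x * g x) (Set.Ioo 0 1))
    (h2 : MeasureTheory.IntegrableOn (fun x => f x * g' x) (Set.Ioo 0 1)) :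
    (∫ x in Set.Ioo (0:ℝ) 1, f' x * g x) + (∫ x in Set.Ioo (0:ℝ) 1, f x * g' x)
      = f 1 * g 1 - f 0 * g 0 := by
  obtain ⟨hfi, hfr⟩ := hf
  obtain ⟨hgi, hgr⟩ := hg
  have keyf : ∀ x ∈ Set.Icc (0:ℝ) 1, f x = f 0 + ∫ t in Set.Ioc 0 x, f' t := by
    intro x hx
    rw [hfr x hx, intervalIntegral.integral_of_le hx.1]
  have keyg : ∀ x ∈ Set.Icc (0:ℝ) 1, g x = g 0 + ∫ t in Set.Ioc 0 x, g' t := by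
    intro x hx
    rw [hgr x hx, intervalIntegral.integral_of_le hx.1]
  have hμf : Integrable f' (volume.restrict (Set.Ioo 0 1)) :=
    hfi.mono_set Set.Ioo_subset_Icc_self
  have hμg : Integrable g' (volume.restrict (Set.Ioo 0 1)) :=
    hgi.mono_set Set.Ioo_subset_Icc_self
  have hIf : (∫ x in Set.Ioo (0:ℝ) 1, f' x) = f 1 - f 0 := by
    have := keyf 1 ⟨zero_le_one, le_refl 1⟩
    rw [integral_Ioc_eq_integral_Ioo] at this
    linarith
  have hIg : (∫ x in Set.Ioo (0:ℝ) 1, g' x) = g 1 - g 0 := by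
    have := keyg 1 ⟨zero_le_one, le_refl 1⟩
    rw [integral_Ioc_eq_integral_Ioo] at this
    linarith
  have int1 : Integrable (fun x => f' x * g 0) (volume.restrict (Set.Ioo 0 1)) :=
    hμf.mul_const _
  have int2 : Integrable (fun x => g' x * f 0) (volume.restrict (Set.Ioo 0 1)) :=
    hμg.mul_const _
  have h1' : Integrable (fun x => f' x * (g 0 + ∫ t in Set.Ioc 0 x, g' t))
      (volume.restrict (Set.Ioo 0 1)) := by
    apply h1.congr_fun _ measurableSet_Ioo
    intro x hx
    show f' x * g x = _
    rw [keyg x (Set.Ioo_subset_Icc_self hx)]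
  have h2' : Integrable (fun x => (f 0 + ∫ t in Set.Ioc 0 x, f' t) * g' x)
      (volume.restrict (Set.Ioo 0 1)) := by
    apply h2.congr_fun _ measurableSet_Ioo
    intro x hx
    show f x * g' x = _
    rw [keyf x (Set.Ioo_subset_Icc_self hx)]
  have intHg : Integrable (fun x => f' x * ∫ t in Set.Ioc 0 x, g' t)
      (volume.restrict (Set.Ioo 0 1)) :=
    (h1'.sub int1).congr (Filter.Eventually.of_forall fun x => by simp only [Pi.sub_apply]; ring)
  have intHf : Integrable (fun x => g' x * ∫ t in Set.Ioc 0 x, f' t)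
      (volume.restrict (Set.Ioo 0 1)) :=
    (h2'.sub int2).congr (Filter.Eventually.of_forall fun x => by simp only [Pi.sub_apply]; ring)
  have e1 : (∫ x in Set.Ioo (0:ℝ) 1, f' x * g x)
      = (∫ x in Set.Ioo (0:ℝ) 1, f' x) * g 0
        + ∫ x in Set.Ioo (0:ℝ) 1, f' x * ∫ t in Set.Ioc 0 x, g' t := by
    rw [setIntegral_congr_fun measurableSet_Ioo
      (show Set.EqOn (fun x => f' x * g x)
        (fun x => f' x * g 0 + f' x * ∫ t in Set.Ioc 0 x, g' t) (Set.Ioo 0 1) from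
        fun x hx => by
          simp only
          rw [keyg x (Set.Ioo_subset_Icc_self hx)]; ring)]
    rw [integral_add int1 intHg, integral_mul_const]
  have e2 : (∫ x in Set.Ioo (0:ℝ) 1, f x * g' x)
      = f 0 * (∫ x in Set.Ioo (0:ℝ) 1, g' x)
        + ∫ x in Set.Ioo (0:ℝ) 1, g' x * ∫ t in Set.Ioc 0 x, f' t := by
    rw [setIntegral_congr_fun measurableSet_Ioo
      (show Set.EqOn (fun x => f x * g' x)
        (fun x => g' x * f 0 + g' x * ∫ t in Set.Ioc 0 x, f' t) (Set.Ioo 0 1) from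
        fun x hx => by
          simp only
          rw [keyf x (Set.Ioo_subset_Icc_self hx)]; ring)]
    rw [integral_add int2 intHf, integral_mul_const]
    ring
  have hcore := ibp_core f' g' hfi hgi
  rw [hIf, hIg] at hcore
  rw [e1, e2, hIf, hIg]
  linear_combination hcore

/-- An `ACOn` function is a.e. strongly measurable on `(0,1)` and bounded on `[0,1]`. -/
lemma ACOn.bdd_aesm (f f' : ℝ → ℝ) (h : ACOn 0 1 f f') :
    MeasureTheory.AEStronglyMeasurable f (MeasureTheory.volume.restrict (Set.Ioo 0 1)) ∧
      ∃ C : ℝ, ∀ x ∈ Set.Icc (0:ℝ) 1, |f x| ≤ C := by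
  obtain ⟨hi, hr⟩ := h
  have key : ∀ x ∈ Set.Icc (0:ℝ) 1, f x = f 0 + ∫ t in Set.Ioc 0 x, f' t := by
    intro x hx
    rw [hr x hx, intervalIntegral.integral_of_le hx.1]
  have hcont : ContinuousOn (fun x => f 0 + ∫ t in Set.Ioc 0 x, f' t) (Set.Icc 0 1) :=
    continuousOn_const.add (intervalIntegral.continuousOn_primitive hi)
  constructor
  · refine (((hcont.mono Set.Ioo_subset_Icc_self).aestronglyMeasurable
      measurableSet_Ioo).congr ?_)
    rw [Filter.EventuallyEq, ae_restrict_iff' measurableSet_Ioo]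
    exact Filter.Eventually.of_forall fun x hx =>
      (key x (Set.Ioo_subset_Icc_self hx)).symm
  · refine ⟨|f 0| + ∫ t in Set.Icc (0:ℝ) 1, |f' t|, fun x hx => ?_⟩
    rw [key x hx]
    refine (abs_add_le _ _).trans (add_le_add_right ?_ _)
    refine (le_trans (by simpa [Real.norm_eq_abs] using
      norm_integral_le_integral_norm (μ := MeasureTheory.volume.restrict (Set.Ioc 0 x)) f')) ?_
    refine setIntegral_mono_set hi.abs
      (Filter.Eventually.of_forall fun t => abs_nonneg _) ?_
    exact HasSubset.Subset.eventuallyLE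
      (show Set.Ioc (0:ℝ) x ⊆ Set.Icc 0 1 from fun t ht => ⟨le_of_lt ht.1, le_trans ht.2 hx.2⟩)

/-- Green's formula for the operator in divergence form:
`∫ (a u'')'' v = (a u'')'(1) v(1) - (a u'')'(0) v(0) - (a u'')(1) v'(1) + (a u'')(0) v'(0)
 + ∫ a u'' v''`. Here `w₁ = (a u'')'` and `w₂ = (a u'')''`. -/
theorem statement7 (a : ℝ → ℝ)
    (haC : ContinuousOn a (Set.Icc 0 1)) (hapos : ∀ x ∈ Set.Icc (0:ℝ) 1, 0 ≤ a x)
    (u u' u'' w₁ w₂ v v' v'' : ℝ → ℝ)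
    -- u ∈ H¹, u' absolutely continuous on [0,1], √a u'' ∈ L², a u'' ∈ H²
    (hu : ACOn 0 1 u u') (hu'' : ACOn 0 1 u' u'')
    (hsau : MeasureTheory.IntegrableOn (fun x => a x * (u'' x) ^ 2) (Set.Ioo 0 1))
    (hau'' : ACOn 0 1 (fun x => a x * u'' x) w₁) (hw₁ : ACOn 0 1 w₁ w₂)
    (hw₂ : MeasureTheory.IntegrableOn (fun x => (w₂ x) ^ 2) (Set.Ioo 0 1))
    -- v ∈ H¹, v' absolutely continuous on [0,1], √a v'' ∈ L²
    (hv : ACOn 0 1 v v') (hv'' : ACOn 0 1 v' v'')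
    (hsav : MeasureTheory.IntegrableOn (fun x => a x * (v'' x) ^ 2) (Set.Ioo 0 1)) :
    ∫ x in Set.Ioo (0:ℝ) 1, w₂ x * v x =
      w₁ 1 * v 1 - w₁ 0 * v 0 - a 1 * u'' 1 * v' 1 + a 0 * u'' 0 * v' 0 +
        ∫ x in Set.Ioo (0:ℝ) 1, a x * u'' x * v'' x := by
  obtain ⟨hv_aesm, Cv, hvC⟩ := ACOn.bdd_aesm v v' hv
  obtain ⟨hw₁_aesm, Cw, hwC⟩ := ACOn.bdd_aesm w₁ w₂ hw₁
  have hw₂_int : MeasureTheory.Integrable w₂ (MeasureTheory.volume.restrict (Set.Ioo 0 1)) :=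
    hw₁.1.mono_set Set.Ioo_subset_Icc_self
  obtain ⟨hv'_aesm, Cv', hv'C⟩ := ACOn.bdd_aesm v' v'' hv''
  have hv'_int : MeasureTheory.Integrable v' (MeasureTheory.volume.restrict (Set.Ioo 0 1)) := by
    refine MeasureTheory.Integrable.mono' (MeasureTheory.integrable_const Cv') hv'_aesm ?_
    rw [ae_restrict_iff' measurableSet_Ioo]
    exact Filter.Eventually.of_forall fun x hx => by
      simpa [Real.norm_eq_abs] using hv'C x (Set.Ioo_subset_Icc_self hx)
  have hu''_aesm : MeasureTheory.AEStronglyMeasurable u''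
      (MeasureTheory.volume.restrict (Set.Ioo 0 1)) :=
    hu''.1.1.mono_measure (MeasureTheory.Measure.restrict_mono Set.Ioo_subset_Icc_self le_rfl)
  have hv''_aesm : MeasureTheory.AEStronglyMeasurable v''
      (MeasureTheory.volume.restrict (Set.Ioo 0 1)) :=
    hv''.1.1.mono_measure (MeasureTheory.Measure.restrict_mono Set.Ioo_subset_Icc_self le_rfl)
  have ha_aesm : MeasureTheory.AEStronglyMeasurable a
      (MeasureTheory.volume.restrict (Set.Ioo 0 1)) :=
    (haC.mono Set.Ioo_subset_Icc_self).aestronglyMeasurable measurableSet_Ioo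
  -- integrability of w₂ * v
  have h1 : MeasureTheory.IntegrableOn (fun x => w₂ x * v x) (Set.Ioo 0 1) := by
    refine (hw₂_int.bdd_mul (c := Cv) hv_aesm ?_).congr
      (Filter.Eventually.of_forall fun x => mul_comm (v x) (w₂ x))
    rw [ae_restrict_iff' measurableSet_Ioo]
    exact Filter.Eventually.of_forall fun x hx => hvC x (Set.Ioo_subset_Icc_self hx)
  -- integrability of w₁ * v'
  have h2 : MeasureTheory.IntegrableOn (fun x => w₁ x * v' x) (Set.Ioo 0 1) := by
    refine hv'_int.bdd_mul (c := Cw) hw₁_aesm ?_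
    rw [ae_restrict_iff' measurableSet_Ioo]
    exact Filter.Eventually.of_forall fun x hx => hwC x (Set.Ioo_subset_Icc_self hx)
  -- integrability of (a u'') v'' by Cauchy–Schwarz
  have h3 : MeasureTheory.IntegrableOn (fun x => a x * u'' x * v'' x) (Set.Ioo 0 1) := by
    refine MeasureTheory.Integrable.mono' ((hsau.add hsav).div_const 2)
      ((ha_aesm.mul hu''_aesm).mul hv''_aesm) ?_
    rw [ae_restrict_iff' measurableSet_Ioo]
    refine Filter.Eventually.of_forall fun x hx => ?_
    have ha := hapos x (Set.Ioo_subset_Icc_self hx)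
    have h₁ := mul_nonneg ha (sq_nonneg (u'' x + v'' x))
    have h₂ := mul_nonneg ha (sq_nonneg (u'' x - v'' x))
    simp only [Pi.add_apply]
    rw [Real.norm_eq_abs, abs_le]
    constructor <;> nlinarith [h₁, h₂]
  have ibp1 := ibp w₁ w₂ v v' hw₁ hv h1 h2
  have ibp2 := ibp (fun x => a x * u'' x) w₁ v' v'' hau'' hv'' h2 h3
  linarith [ibp1, ibp2]
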